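/- Let E and H be real Hilbert spaces, Λ ⊆ H a nonempty closed convex set, and F : E × H → ℝ. Let 0 < μ < L and set κ := L/μ. Assume: (i) for every w ∈ E, the map λ ↦ F(w, λ) is differentiable and μ-strongly concave on H with a global maximizer λ*(w) that lies in Λ; (ii) the partial gradient map (w, λ) ↦ ∇_λ F(w, λ) is L-Lipschitz with respect to the product norm. Let η > 0, G ≥ 0, and let τ ≥ 1 and S ≥ 1 be integers with T = S·τ. Let (w^{(t)})_{t=0}^{T} be points of E satisfying ‖w^{(t+1)} − w^{(t)}‖ ≤ η·G for all 0 ≤ t < T, let λ^{(0)} ∈ Λ, and define λ^{(s+1)} := proj_Λ(λ^{(s)} + (1/L)·∇_λ F(w^{(sτ)}, λ^{(s)})) for s = 0, …, S−1. Then for every t with 0 ≤ t ≤ T: ‖λ*(w^{(t)}) − λ^{(⌊t/τ⌋)}‖² ≤ 2·(1 − 1/(2κ))^{⌊t/τ⌋}·‖λ^{(0)} − λ*(w^{(0)})‖² + 2·(4κ² + 1)·κ²·τ²·η²·G². -/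

import Mathlib

set_option maxHeartbeats 1000000

open InnerProductSpace Filter Set
lemma aux_first_order {H : Type*} [NormedAddCommGroup H] [InnerProductSpace ℝ H] [CompleteSpace H]
    (f : H → ℝ) (μ : ℝ) (hdiff : Differentiable ℝ f)
    (hconc : ∀ x y : H, ∀ a : ℝ, 0 ≤ a → a ≤ 1 →
      a * f x + (1 - a) * f y + μ / 2 * a * (1 - a) * ‖x - y‖ ^ 2 ≤ f (a • x + (1 - a) • y))
    (x y : H) :
    f x - f y + μ / 2 * ‖x - y‖ ^ 2 ≤ ⟪gradient f y, x - y⟫_ℝ := by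
  set v := x - y with hv
  have hline : ∀ a : ℝ, y + a • v = a • x + (1 - a) • y := by
    intro a; rw [hv]; module
  set φ : ℝ → ℝ := fun a => f (y + a • v) with hφdef
  have hφ0 : φ 0 = f y := by simp [hφdef]
  have hφ : HasDerivAt φ (⟪gradient f y, v⟫_ℝ) 0 := by
    have h1 : HasDerivAt (fun a : ℝ => y + a • v) v 0 := by
      simpa using ((hasDerivAt_id (0:ℝ)).smul_const v).const_add y
    have h2 : HasFDerivAt f (toDual ℝ H (gradient f y)) (y + (0:ℝ) • v) := by
      simpa using (hdiff y).hasGradientAt.hasFDerivAt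
    simpa [hφdef, Function.comp_def] using h2.comp_hasDerivAt (0:ℝ) h1
  have hslope : Tendsto (slope φ 0) (nhdsWithin 0 (Ioi 0)) (nhds (⟪gradient f y, v⟫_ℝ)) := by
    exact (hasDerivAt_iff_tendsto_slope.mp hφ).mono_left
      (nhdsWithin_mono 0 (fun a ha => ne_of_gt ha))
  have hψ : Tendsto (fun a : ℝ => f x - f y + μ / 2 * (1 - a) * ‖v‖ ^ 2)
      (nhdsWithin 0 (Ioi 0)) (nhds (f x - f y + μ / 2 * ‖v‖ ^ 2)) := by
    have : ContinuousAt (fun a : ℝ => f x - f y + μ / 2 * (1 - a) * ‖v‖ ^ 2) 0 := by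
      fun_prop
    simpa using this.continuousWithinAt.tendsto
  have hev : ∀ᶠ a in nhdsWithin (0:ℝ) (Ioi 0),
      f x - f y + μ / 2 * (1 - a) * ‖v‖ ^ 2 ≤ slope φ 0 a := by
    filter_upwards [Ioc_mem_nhdsGT_of_mem (by norm_num : (0:ℝ) ∈ Ico 0 1)] with a ha
    have h := hconc x y a (le_of_lt ha.1) ha.2
    rw [← hline a] at h
    have : slope φ 0 a = (φ a - f y) / a := by
      rw [slope_def_field, hφ0]; ring
    rw [this, le_div_iff₀ ha.1]
    calc (f x - f y + μ / 2 * (1 - a) * ‖v‖ ^ 2) * a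
        = a * f x + (1 - a) * f y + μ / 2 * a * (1 - a) * ‖v‖ ^ 2 - f y := by ring
      _ ≤ φ a - f y := by have := h; simp only [hφdef]; linarith
  exact le_of_tendsto_of_tendsto hψ hslope hev

lemma aux_strong_mono {H : Type*} [NormedAddCommGroup H] [InnerProductSpace ℝ H] [CompleteSpace H]
    (f : H → ℝ) (μ : ℝ) (hdiff : Differentiable ℝ f)
    (hconc : ∀ x y : H, ∀ a : ℝ, 0 ≤ a → a ≤ 1 →
      a * f x + (1 - a) * f y + μ / 2 * a * (1 - a) * ‖x - y‖ ^ 2 ≤ f (a • x + (1 - a) • y))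
    (x y : H) :
    μ * ‖x - y‖ ^ 2 ≤ ⟪gradient f y - gradient f x, x - y⟫_ℝ := by
  have h1 := aux_first_order f μ hdiff hconc x y
  have h2 := aux_first_order f μ hdiff hconc y x
  have e1 : ⟪gradient f x, y - x⟫_ℝ = - ⟪gradient f x, x - y⟫_ℝ := by
    rw [show y - x = -(x-y) by abel, inner_neg_right]
  have e2 : ‖y - x‖ = ‖x - y‖ := norm_sub_rev y x
  rw [inner_sub_left]
  rw [e1, e2] at h2
  linarith

lemma aux_ascent {H : Type*} [NormedAddCommGroup H] [InnerProductSpace ℝ H] [CompleteSpace H]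
    (f : H → ℝ) (L : ℝ) (hL : 0 < L) (hdiff : Differentiable ℝ f)
    (hlipf : ∀ a b : H, ‖gradient f a - gradient f b‖ ≤ L * ‖a - b‖)
    (x u : H) :
    f x + ⟪gradient f x, u⟫_ℝ - L / 2 * ‖u‖ ^ 2 ≤ f (x + u) := by
  set ψ : ℝ → ℝ := fun t => f (x + t • u) - t * ⟪gradient f x, u⟫_ℝ + L / 2 * ‖u‖ ^ 2 * t ^ 2
    with hψdef
  have h1 : ∀ t : ℝ, HasDerivAt (fun t : ℝ => f (x + t • u)) ⟪gradient f (x + t • u), u⟫_ℝ t := by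
    intro t
    have h1a : HasDerivAt (fun t : ℝ => x + t • u) u t := by
      simpa using ((hasDerivAt_id t).smul_const u).const_add x
    have h1b : HasFDerivAt f (InnerProductSpace.toDual ℝ H (gradient f (x + t • u))) (x + t • u) :=
      (hdiff _).hasGradientAt.hasFDerivAt
    simpa [Function.comp_def] using h1b.comp_hasDerivAt t h1a
  have hψ : ∀ t : ℝ, HasDerivAt ψ
      (⟪gradient f (x + t • u), u⟫_ℝ - ⟪gradient f x, u⟫_ℝ + L / 2 * ‖u‖ ^ 2 * (2 * t)) t := by
    intro t
    have h2 : HasDerivAt (fun t : ℝ => t * ⟪gradient f x, u⟫_ℝ) ⟪gradient f x, u⟫_ℝ t := by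
      simpa using (hasDerivAt_id t).mul_const ⟪gradient f x, u⟫_ℝ
    have h3 : HasDerivAt (fun t : ℝ => L / 2 * ‖u‖ ^ 2 * t ^ 2) (L / 2 * ‖u‖ ^ 2 * (2 * t)) t := by
      have h := (hasDerivAt_pow 2 t).const_mul (L / 2 * ‖u‖ ^ 2)
      refine h.congr_deriv ?_
      push_cast; ring
    exact ((h1 t).sub h2).add h3
  have hmono : MonotoneOn ψ (Icc (0:ℝ) 1) := by
    apply monotoneOn_of_deriv_nonneg (convex_Icc 0 1)
    · exact Continuous.continuousOn (by
        have : Continuous ψ := by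
          have : Continuous fun t : ℝ => f (x + t • u) :=
            hdiff.continuous.comp (by continuity)
          rw [hψdef]
          exact (this.sub (continuous_id.mul continuous_const)).add (continuous_const.mul (continuous_pow 2))
        exact this)
    · intro t ht
      exact (hψ t).differentiableAt.differentiableWithinAt
    · intro t ht
      rw [interior_Icc] at ht
      rw [(hψ t).deriv]
      have key : ⟪gradient f (x + t • u) - gradient f x, u⟫_ℝ ≥ -(L * t * ‖u‖ ^ 2) := by
        have hb : ‖gradient f (x + t • u) - gradient f x‖ ≤ L * (t * ‖u‖) := by
          have := hlipf (x + t • u) x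
          simpa [norm_smul, abs_of_pos ht.1, mul_assoc] using this
        have habs := abs_real_inner_le_norm (gradient f (x + t • u) - gradient f x) u
        have := neg_abs_le ⟪gradient f (x + t • u) - gradient f x, u⟫_ℝ
        nlinarith [norm_nonneg u, norm_nonneg (gradient f (x + t • u) - gradient f x)]
      rw [inner_sub_left] at key
      nlinarith [ht.1]
  have h01 := hmono (by norm_num : (0:ℝ) ∈ Icc (0:ℝ) 1) (by norm_num : (1:ℝ) ∈ Icc (0:ℝ) 1)
    (by norm_num)
  simp only [hψdef] at h01
  simp only [zero_smul, add_zero, one_smul] at h01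
  nlinarith [h01]

lemma aux_cocoercive {H : Type*} [NormedAddCommGroup H] [InnerProductSpace ℝ H] [CompleteSpace H]
    (f : H → ℝ) (μ L : ℝ) (hμ : 0 ≤ μ) (hL : 0 < L) (hdiff : Differentiable ℝ f)
    (hconc : ∀ x y : H, ∀ a : ℝ, 0 ≤ a → a ≤ 1 →
      a * f x + (1 - a) * f y + μ / 2 * a * (1 - a) * ‖x - y‖ ^ 2 ≤ f (a • x + (1 - a) • y))
    (hlipf : ∀ a b : H, ‖gradient f a - gradient f b‖ ≤ L * ‖a - b‖)
    (x y : H) :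
    ⟪gradient f x - gradient f y, x - y⟫_ℝ ≤ -(1/L) * ‖gradient f x - gradient f y‖ ^ 2 := by
  have key : ∀ a b : H, f a - f b + (1/(2*L)) * ‖gradient f a - gradient f b‖ ^ 2
      ≤ ⟪gradient f b, a - b⟫_ℝ := by
    intro a b
    set d := gradient f a - gradient f b with hd
    set u := (1/L) • d with hu
    have step1 := aux_ascent f L hL hdiff hlipf a u
    have step2 : f (a + u) ≤ f b + ⟪gradient f b, (a + u) - b⟫_ℝ := by
      have := aux_first_order f μ hdiff hconc (a + u) b
      nlinarith [sq_nonneg ‖a + u - b‖, norm_nonneg (a + u - b)]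
    have e1 : ⟪gradient f b, (a + u) - b⟫_ℝ = ⟪gradient f b, a - b⟫_ℝ + ⟪gradient f b, u⟫_ℝ := by
      rw [show (a + u) - b = (a - b) + u by abel, inner_add_right]
    have e2 : ⟪gradient f a, u⟫_ℝ = (1/L) * ⟪gradient f a, d⟫_ℝ := real_inner_smul_right _ _ _
    have e3 : ⟪gradient f b, u⟫_ℝ = (1/L) * ⟪gradient f b, d⟫_ℝ := real_inner_smul_right _ _ _
    have e4 : ‖u‖ ^ 2 = (1/L)^2 * ‖d‖ ^ 2 := by
      rw [hu, norm_smul, Real.norm_eq_abs, abs_of_pos (by positivity : (0:ℝ) < 1/L)]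
      ring
    have e5 : ⟪gradient f a, d⟫_ℝ - ⟪gradient f b, d⟫_ℝ = ‖d‖ ^ 2 := by
      rw [← inner_sub_left, ← hd, real_inner_self_eq_norm_sq]
    have hL' : L ≠ 0 := ne_of_gt hL
    rw [e2, e4] at step1
    rw [e1, e3] at step2
    have expand : (1/L) * ⟪gradient f a, d⟫_ℝ - (1/L) * ⟪gradient f b, d⟫_ℝ
        = (1/L) * ‖d‖^2 := by rw [← mul_sub, e5]
    have harith : L/2 * ((1/L)^2 * ‖d‖^2) = 1/(2*L) * ‖d‖^2 := by
      field_simp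
    have harith2 : (1/L) * ‖d‖^2 = 1/(2*L) * ‖d‖^2 + 1/(2*L) * ‖d‖^2 := by
      field_simp; ring
    linarith
  have k1 := key x y
  have k2 := key y x
  have e1 : ⟪gradient f x, y - x⟫_ℝ = - ⟪gradient f x, x - y⟫_ℝ := by
    rw [show y - x = -(x-y) by abel, inner_neg_right]
  have e2 : ‖gradient f y - gradient f x‖ = ‖gradient f x - gradient f y‖ := norm_sub_rev _ _
  rw [e1, e2] at k2
  rw [inner_sub_left]
  have h2L : 1/(2*L) * ‖gradient f x - gradient f y‖^2 + 1/(2*L) * ‖gradient f x - gradient f y‖^2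
      = (1/L) * ‖gradient f x - gradient f y‖^2 := by
    field_simp; ring
  linarith

lemma aux_proj_var {H : Type*} [NormedAddCommGroup H] [InnerProductSpace ℝ H]
    {Λ : Set H} (hΛconv : Convex ℝ Λ) (proj : H → H)
    (hproj : ∀ x : H, proj x ∈ Λ ∧ ∀ y ∈ Λ, ‖x - proj x‖ ≤ ‖x - y‖)
    (x : H) {y : H} (hy : y ∈ Λ) :
    ⟪x - proj x, y - proj x⟫_ℝ ≤ 0 := by
  set p := proj x with hp
  have hpΛ := (hproj x).1
  have key : ∀ t : ℝ, 0 < t → t ≤ 1 → ⟪x - p, y - p⟫_ℝ ≤ t / 2 * ‖y - p‖ ^ 2 := by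
    intro t ht ht1
    have hz : p + t • (y - p) ∈ Λ := by
      have := hΛconv hpΛ hy (by linarith : (0:ℝ) ≤ 1 - t) (le_of_lt ht) (by ring)
      convert this using 1
      module
    have hle := (hproj x).2 _ hz
    have hsq : ‖x - p‖ ^ 2 ≤ ‖x - (p + t • (y - p))‖ ^ 2 := by
      apply pow_le_pow_left₀ (norm_nonneg _) hle
    have hexp : ‖x - (p + t • (y - p))‖ ^ 2
        = ‖x - p‖ ^ 2 - 2 * (t * ⟪x - p, y - p⟫_ℝ) + t ^ 2 * ‖y - p‖ ^ 2 := by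
      have : x - (p + t • (y - p)) = (x - p) - t • (y - p) := by abel
      rw [this, norm_sub_sq_real, real_inner_smul_right, norm_smul, Real.norm_eq_abs,
        abs_of_pos ht]
      ring
    rw [hexp] at hsq
    nlinarith
  by_contra hcon
  push_neg at hcon
  set c := ⟪x - p, y - p⟫_ℝ with hc
  set K := ‖y - p‖ ^ 2 with hK
  have hK0 : 0 ≤ K := by positivity
  have ht := key (min 1 (c / (K + 1))) (by positivity) (min_le_left _ _)
  have hmin : min 1 (c / (K + 1)) ≤ c / (K + 1) := min_le_right _ _
  have : c ≤ c / (K + 1) / 2 * K := le_trans ht (by nlinarith)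
  rw [div_div] at this
  rw [div_mul_eq_mul_div, le_div_iff₀ (by positivity)] at this
  nlinarith

lemma aux_proj_nonexp {H : Type*} [NormedAddCommGroup H] [InnerProductSpace ℝ H]
    {Λ : Set H} (hΛconv : Convex ℝ Λ) (proj : H → H)
    (hproj : ∀ x : H, proj x ∈ Λ ∧ ∀ y ∈ Λ, ‖x - proj x‖ ≤ ‖x - y‖)
    (x y : H) : ‖proj x - proj y‖ ≤ ‖x - y‖ := by
  have h1 := aux_proj_var hΛconv proj hproj x (hproj y).1
  have h2 := aux_proj_var hΛconv proj hproj y (hproj x).1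
  set q := proj x - proj y with hq
  have e1 : proj y - proj x = -q := by rw [hq]; abel
  rw [e1, inner_neg_right] at h1
  have key : ‖q‖ ^ 2 ≤ ⟪x - y, q⟫_ℝ := by
    have : ⟪(x - proj x) - (y - proj y), q⟫_ℝ ≥ 0 := by
      rw [inner_sub_left]; linarith
    have e2 : x - y = ((x - proj x) - (y - proj y)) + q := by rw [hq]; abel
    rw [e2, inner_add_left, real_inner_self_eq_norm_sq]
    linarith
  rcases eq_or_lt_of_le (norm_nonneg q) with h0 | h0
  · rw [← h0]; exact norm_nonneg _
  · have hin := le_trans key (real_inner_le_norm (x - y) q)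
    nlinarith [hin, h0]

lemma aux_proj_mem {H : Type*} [NormedAddCommGroup H] [InnerProductSpace ℝ H]
    {Λ : Set H} (proj : H → H)
    (hproj : ∀ x : H, proj x ∈ Λ ∧ ∀ y ∈ Λ, ‖x - proj x‖ ≤ ‖x - y‖)
    {p : H} (hp : p ∈ Λ) : proj p = p := by
  have := (hproj p).2 p hp
  simp at this
  have : ‖p - proj p‖ = 0 := le_antisymm (by simpa using this) (norm_nonneg _)
  rw [norm_sub_eq_zero_iff] at this
  exact this.symm

lemma aux_young (a b c : ℝ) (hc : 0 < c) : (a + b)^2 ≤ (1 + c) * a^2 + (1 + 1/c) * b^2 := by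
  have h := sq_nonneg (c * a - b)
  have h2 : 0 < 1/c := by positivity
  have key : c * ((1 + c) * a^2 + (1 + 1/c) * b^2 - (a + b)^2) = (c*a - b)^2 := by
    field_simp; ring
  nlinarith [mul_pos hc h2]



/-- **Dual optimality-gap recursion of DRFA-GA (decreasing optimal gap of `λ`).**
With `Λ ⊆ H` nonempty closed convex (projection `proj`), `F(w, ·)` differentiable,
`μ`-strongly concave on `H` with global maximizer `λ*(w) ∈ Λ`, the partial dual
gradient jointly `L`-Lipschitz in the product norm `√(‖·‖² + ‖·‖²)`, `0 < μ < L`,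
`κ = L/μ`; if the primal iterates move at most `η·G` per step and
`λ^{(s+1)} = proj(λ^{(s)} + (1/L)·∇_λ F(w^{(sτ)}, λ^{(s)}))`, then for all `t ≤ T = Sτ`:
`‖λ*(w^{(t)}) − λ^{(⌊t/τ⌋)}‖² ≤ 2(1 − 1/(2κ))^{⌊t/τ⌋}‖λ^{(0)} − λ*(w^{(0)})‖²
 + 2(4κ² + 1)κ²τ²η²G²`. -/
theorem drfa_ga_dual_gap_recursion
    {E H : Type*} [NormedAddCommGroup E] [InnerProductSpace ℝ E] [CompleteSpace E]
    [NormedAddCommGroup H] [InnerProductSpace ℝ H] [CompleteSpace H]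
    (Λ : Set H) (hΛne : Λ.Nonempty) (hΛcl : IsClosed Λ) (hΛconv : Convex ℝ Λ)
    (proj : H → H)
    (hproj : ∀ x : H, proj x ∈ Λ ∧ ∀ y ∈ Λ, ‖x - proj x‖ ≤ ‖x - y‖)
    (F : E → H → ℝ) (μ L : ℝ) (hμ : 0 < μ) (hμL : μ < L)
    (κ : ℝ) (hκ : κ = L / μ)
    (hdiff : ∀ w : E, Differentiable ℝ (F w))
    (hconc : ∀ w : E, ∀ x y : H, ∀ a : ℝ, 0 ≤ a → a ≤ 1 →
      a * F w x + (1 - a) * F w y + μ / 2 * a * (1 - a) * ‖x - y‖ ^ 2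
        ≤ F w (a • x + (1 - a) • y))
    (lam : E → H) (hlam_mem : ∀ w : E, lam w ∈ Λ)
    (hlam_max : ∀ w : E, ∀ l : H, F w l ≤ F w (lam w))
    (hlip : ∀ w₁ w₂ : E, ∀ l₁ l₂ : H,
      ‖gradient (F w₁) l₁ - gradient (F w₂) l₂‖
        ≤ L * Real.sqrt (‖w₁ - w₂‖ ^ 2 + ‖l₁ - l₂‖ ^ 2))
    (η G : ℝ) (hη : 0 < η) (hG : 0 ≤ G)
    (τ S T : ℕ) (hτ : 1 ≤ τ) (hS : 1 ≤ S) (hT : T = S * τ)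
    (w : ℕ → E) (hw : ∀ t < T, ‖w (t + 1) - w t‖ ≤ η * G)
    (lamSeq : ℕ → H) (hlam0 : lamSeq 0 ∈ Λ)
    (hupdate : ∀ s < S,
      lamSeq (s + 1) = proj (lamSeq s + (1 / L) • gradient (F (w (s * τ))) (lamSeq s))) :
    ∀ t ≤ T,
      ‖lam (w t) - lamSeq (t / τ)‖ ^ 2
        ≤ 2 * (1 - 1 / (2 * κ)) ^ (t / τ) * ‖lamSeq 0 - lam (w 0)‖ ^ 2
          + 2 * (4 * κ ^ 2 + 1) * κ ^ 2 * (τ : ℝ) ^ 2 * η ^ 2 * G ^ 2 := by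
  have hL : 0 < L := lt_trans hμ hμL
  have hκ1 : 1 < κ := by rw [hκ]; exact (one_lt_div hμ).mpr hμL
  have hκ0 : 0 < κ := lt_trans one_pos hκ1
  set r : ℝ := 1 - 1/(2*κ) with hr
  have hrinv : 0 < 1/(2*κ) := by positivity
  have hrinv1 : 1/(2*κ) < 1 := by
    rw [div_lt_one (by linarith)]; linarith
  have hr0 : 0 < r := by rw [hr]; linarith
  have hr1 : r < 1 := by rw [hr]; linarith
  have hηG : 0 ≤ η * G := mul_nonneg (le_of_lt hη) hG
  -- gradient of F v vanishes at lam v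
  have hgrad0 : ∀ v : E, gradient (F v) (lam v) = 0 := by
    intro v
    have hmax : IsLocalMax (F v) (lam v) := Filter.Eventually.of_forall (fun l => hlam_max v l)
    have hf : fderiv ℝ (F v) (lam v) = 0 := hmax.fderiv_eq_zero
    unfold gradient
    rw [hf, map_zero]
  -- Lipschitz gradient in λ only
  have hlipf : ∀ v : E, ∀ a b : H, ‖gradient (F v) a - gradient (F v) b‖ ≤ L * ‖a - b‖ := by
    intro v a b
    have h := hlip v v a b
    have h0 : Real.sqrt (‖v - v‖ ^ 2 + ‖a - b‖ ^ 2) = ‖a - b‖ := by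
      simp [Real.sqrt_sq (norm_nonneg (a - b))]
    rwa [h0] at h
  -- κ-Lipschitzness of lam
  have hlamlip : ∀ v₁ v₂ : E, ‖lam v₁ - lam v₂‖ ≤ κ * ‖v₁ - v₂‖ := by
    intro v₁ v₂
    have hsm := aux_strong_mono (F v₁) μ (hdiff v₁) (hconc v₁) (lam v₁) (lam v₂)
    rw [hgrad0 v₁, sub_zero] at hsm
    have hb : ‖gradient (F v₁) (lam v₂)‖ ≤ L * ‖v₁ - v₂‖ := by
      have h := hlip v₁ v₂ (lam v₂) (lam v₂)
      rw [hgrad0 v₂] at h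
      have h0 : Real.sqrt (‖v₁ - v₂‖ ^ 2 + ‖lam v₂ - lam v₂‖ ^ 2) = ‖v₁ - v₂‖ := by
        simp [Real.sqrt_sq (norm_nonneg (v₁ - v₂))]
      rw [h0] at h
      simpa using h
    have hip := real_inner_le_norm (gradient (F v₁) (lam v₂)) (lam v₁ - lam v₂)
    have hκμ : κ * μ = L := by rw [hκ]; field_simp
    rcases eq_or_lt_of_le (norm_nonneg (lam v₁ - lam v₂)) with h0 | h0
    · rw [← h0]; positivity
    · have h3 := mul_le_mul_of_nonneg_right hb (norm_nonneg (lam v₁ - lam v₂))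
      have h4 : μ * ‖lam v₁ - lam v₂‖^2 ≤ L * ‖v₁ - v₂‖ * ‖lam v₁ - lam v₂‖ := by nlinarith
      rw [← mul_le_mul_iff_right₀ (mul_pos hμ h0)]
      calc μ * ‖lam v₁ - lam v₂‖ * ‖lam v₁ - lam v₂‖ = μ * ‖lam v₁ - lam v₂‖^2 := by ring
        _ ≤ L * ‖v₁ - v₂‖ * ‖lam v₁ - lam v₂‖ := h4
        _ = μ * ‖lam v₁ - lam v₂‖ * (κ * ‖v₁ - v₂‖) := by rw [← hκμ]; ring
  -- telescoping movement of w
  have hwmove : ∀ m n : ℕ, m ≤ n → n ≤ T → ‖w n - w m‖ ≤ ((n - m : ℕ) : ℝ) * (η * G) := by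
    intro m n hmn hnT
    induction n, hmn using Nat.le_induction with
    | base => simp
    | succ n hmn ih =>
      have hnT' : n ≤ T := le_trans (Nat.le_succ n) hnT
      have h1 := hw n (lt_of_lt_of_le (Nat.lt_succ_self n) hnT)
      have h2 := ih hnT'
      have htri : ‖w (n+1) - w m‖ ≤ ‖w (n+1) - w n‖ + ‖w n - w m‖ :=
        norm_sub_le_norm_sub_add_norm_sub _ _ _
      have hcast : ((n + 1 - m : ℕ) : ℝ) = ((n - m : ℕ) : ℝ) + 1 := by
        rw [Nat.sub_add_comm hmn]; push_cast; ring
      rw [hcast]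
      calc ‖w (n+1) - w m‖ ≤ ‖w (n+1) - w n‖ + ‖w n - w m‖ := htri
        _ ≤ η * G + ((n - m : ℕ) : ℝ) * (η * G) := add_le_add h1 h2
        _ = (((n - m : ℕ) : ℝ) + 1) * (η * G) := by ring
  -- the dual gap sequence
  set d : ℕ → ℝ := fun s => ‖lamSeq s - lam (w (s * τ))‖ with hd
  have hd0 : ∀ s, 0 ≤ d s := fun s => norm_nonneg _
  set C : ℝ := 4 * κ^4 * (τ:ℝ)^2 * η^2 * G^2 with hC
  have hC0 : 0 ≤ C := by positivity
  -- one step recursion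
  have Dstep : ∀ s, s < S → d (s+1)^2 ≤ r * d s^2 + (1-r) * C := by
    intro s hsS
    set f := F (w (s * τ)) with hf
    set g := gradient f with hg
    set p := lam (w (s * τ)) with hp
    have hgp : g p = 0 := hgrad0 _
    -- contraction to the fixed maximizer
    have hstep1 : ‖lamSeq (s+1) - p‖^2 ≤ (1 - 1/κ) * d s^2 := by
      have hfix : proj (p + (1/L) • g p) = p := by
        rw [hgp, smul_zero, add_zero]
        exact aux_proj_mem proj hproj (hlam_mem _)
      have hne : ‖lamSeq (s+1) - p‖ ≤ ‖(lamSeq s + (1/L) • g (lamSeq s)) - (p + (1/L) • g p)‖ := by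
        rw [hupdate s hsS]
        nth_rewrite 1 [← hfix]
        exact aux_proj_nonexp hΛconv proj hproj _ _
      have harg : (lamSeq s + (1/L) • g (lamSeq s)) - (p + (1/L) • g p)
          = (lamSeq s - p) + (1/L) • (g (lamSeq s) - g p) := by
        rw [smul_sub]; abel
      rw [harg] at hne
      set d' := lamSeq s - p with hd'
      set e := g (lamSeq s) - g p with he
      have hexp : ‖d' + (1/L) • e‖^2
          = ‖d'‖^2 + 2 * ((1/L) * ⟪d', e⟫_ℝ) + (1/L)^2 * ‖e‖^2 := by
        rw [norm_add_sq_real, real_inner_smul_right, norm_smul, Real.norm_eq_abs,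
          abs_of_pos (by positivity : (0:ℝ) < 1/L)]
        ring
      have hcoco := aux_cocoercive f μ L (le_of_lt hμ) hL (hdiff _) (hconc _) (hlipf _)
        (lamSeq s) p
      have hsm := aux_strong_mono f μ (hdiff _) (hconc _) (lamSeq s) p
      have hcomm : ⟪d', e⟫_ℝ = ⟪e, d'⟫_ℝ := real_inner_comm _ _
      have hsm' : μ * ‖d'‖^2 ≤ - ⟪e, d'⟫_ℝ := by
        have : g p - g (lamSeq s) = -e := by rw [he]; abel
        rw [this, inner_neg_left] at hsm
        exact hsm
      have hsq : ‖lamSeq (s+1) - p‖^2 ≤ ‖d' + (1/L) • e‖^2 :=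
        pow_le_pow_left₀ (norm_nonneg _) hne 2
      have hκμ : 1/κ = μ / L := by rw [hκ]; field_simp
      have hbound : ‖d' + (1/L) • e‖^2 ≤ (1 - μ/L) * ‖d'‖^2 := by
        rw [hexp]
        have hL2 : (0:ℝ) < 1/L := by positivity
        have h1 : (1/L)^2 * ‖e‖^2 ≤ (1/L) * (- ⟪e, d'⟫_ℝ) := by
          nlinarith [hcoco]
        rw [hcomm]
        have h2 := mul_le_mul_of_nonneg_left hsm' (le_of_lt hL2)
        have h3 : (1 - μ/L) * ‖d'‖^2 = ‖d'‖^2 - (1/L) * (μ * ‖d'‖^2) := by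
          field_simp
        rw [h3]
        linarith
      have hds : d s = ‖d'‖ := rfl
      rw [hds, hκμ]
      exact le_trans hsq hbound
    -- movement of the maximizer
    have hmove : ‖p - lam (w ((s+1) * τ))‖ ≤ κ * ((τ:ℝ) * (η * G)) := by
      have h1 := hlamlip (w (s * τ)) (w ((s+1) * τ))
      have h2 : ‖w ((s+1) * τ) - w (s * τ)‖ ≤ (((s+1) * τ - s * τ : ℕ) : ℝ) * (η * G) := by
        apply hwmove
        · exact Nat.mul_le_mul_right τ (Nat.le_succ s)
        · rw [hT]; exact Nat.mul_le_mul_right τ hsS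
      have h3 : ((s+1) * τ - s * τ : ℕ) = τ := by
        rw [Nat.succ_mul, Nat.add_sub_cancel_left]
      rw [h3] at h2
      have h4 : ‖w (s * τ) - w ((s+1) * τ)‖ = ‖w ((s+1) * τ) - w (s * τ)‖ := norm_sub_rev _ _
      calc ‖p - lam (w ((s+1) * τ))‖ ≤ κ * ‖w (s * τ) - w ((s+1) * τ)‖ := h1
        _ = κ * ‖w ((s+1) * τ) - w (s * τ)‖ := by rw [h4]
        _ ≤ κ * ((τ:ℝ) * (η * G)) := by
            apply mul_le_mul_of_nonneg_left h2 (le_of_lt hκ0)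
    -- combine via Young
    have htri : d (s+1) ≤ ‖lamSeq (s+1) - p‖ + ‖p - lam (w ((s+1) * τ))‖ :=
      norm_sub_le_norm_sub_add_norm_sub _ _ _
    set A := ‖lamSeq (s+1) - p‖ with hA
    set B := ‖p - lam (w ((s+1) * τ))‖ with hB
    have hA0 : 0 ≤ A := norm_nonneg _
    have hB0 : 0 ≤ B := norm_nonneg _
    have hc0 : (0:ℝ) < 1/(2*κ - 1) := by
      apply div_pos one_pos; linarith
    have hyoung : d (s+1)^2 ≤ (1 + 1/(2*κ-1)) * A^2 + (1 + 1/(1/(2*κ-1))) * B^2 := by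
      have h := aux_young A B (1/(2*κ-1)) hc0
      have hsq : d (s+1)^2 ≤ (A + B)^2 := by
        apply pow_le_pow_left₀ (hd0 _) htri
      linarith
    have e1 : (1 : ℝ) + 1/(1/(2*κ-1)) = 2*κ := by
      rw [one_div_one_div]; ring
    have e2 : (1 + 1/(2*κ-1)) * (1 - 1/κ) ≤ r := by
      rw [hr]
      have h2κ : (0:ℝ) < 2*κ - 1 := by linarith
      have hκne : κ ≠ 0 := ne_of_gt hκ0
      have key : (1 - 1/(2*κ)) - (1 + 1/(2*κ-1)) * (1 - 1/κ) = 1/(2*κ*(2*κ-1)) := by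
        field_simp
        ring
      have hpos : 0 < 1/(2*κ*(2*κ-1)) := by
        apply div_pos one_pos
        nlinarith
      linarith
    have hfinal1 : (1 + 1/(2*κ-1)) * A^2 ≤ r * d s^2 := by
      calc (1 + 1/(2*κ-1)) * A^2 ≤ (1 + 1/(2*κ-1)) * ((1 - 1/κ) * d s^2) := by
            apply mul_le_mul_of_nonneg_left hstep1 (by positivity)
        _ = ((1 + 1/(2*κ-1)) * (1 - 1/κ)) * d s^2 := by ring
        _ ≤ r * d s^2 := by
            apply mul_le_mul_of_nonneg_right e2 (sq_nonneg _)
    have hfinal2 : (1 + 1/(1/(2*κ-1))) * B^2 ≤ (1-r) * C := by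
      rw [e1, hr, hC]
      have hBsq : B^2 ≤ κ^2 * ((τ:ℝ)^2 * (η^2 * G^2)) := by
        have := pow_le_pow_left₀ hB0 hmove 2
        calc B^2 ≤ (κ * ((τ:ℝ) * (η * G)))^2 := this
          _ = κ^2 * ((τ:ℝ)^2 * (η^2 * G^2)) := by ring
      have harith : (1 - (1 - 1/(2*κ))) * (4 * κ^4 * (τ:ℝ)^2 * η^2 * G^2)
          = 2*κ * (κ^2 * ((τ:ℝ)^2 * (η^2 * G^2))) := by
        field_simp
        ring
      rw [harith]
      apply mul_le_mul_of_nonneg_left hBsq (by positivity)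
    rw [e1] at hyoung hfinal2
    clear_value A B r C d
    linarith
  -- unrolled recursion
  have hDs : ∀ s, s ≤ S → d s^2 ≤ r^s * d 0^2 + C := by
    intro s
    induction s with
    | zero =>
      intro _
      simp only [pow_zero, one_mul]
      linarith [hC0]
    | succ s ih =>
      intro hs1
      have hsS : s < S := Nat.lt_of_succ_le hs1
      have h1 := Dstep s hsS
      have h2 := ih (le_of_lt hsS)
      calc d (s+1)^2 ≤ r * d s^2 + (1-r) * C := h1
        _ ≤ r * (r^s * d 0^2 + C) + (1-r) * C := by nlinarith [hr0, h2]
        _ = r^(s+1) * d 0^2 + C := by ring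
  -- conclusion
  intro t ht
  set s := t / τ with hs
  have hτ0 : 0 < τ := hτ
  have hsS : s ≤ S := by
    rw [hs, hT] at *
    calc t / τ ≤ S * τ / τ := Nat.div_le_div_right ht
      _ = S := Nat.mul_div_cancel S hτ0
  have hst : s * τ ≤ t := Nat.div_mul_le_self t τ
  have hmod : t - s * τ ≤ τ := by
    have h1 : t % τ < τ := Nat.mod_lt t hτ0
    have h2 : t = t % τ + s * τ := by
      rw [hs, mul_comm]
      exact (Nat.mod_add_div t τ).symm
    rw [h2, Nat.add_sub_cancel]
    exact le_of_lt h1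
  have hmove2 : ‖lam (w t) - lam (w (s * τ))‖ ≤ κ * ((τ:ℝ) * (η * G)) := by
    have h2 := hwmove (s * τ) t hst ht
    have h3 : ((t - s * τ : ℕ):ℝ) ≤ (τ:ℝ) := by exact_mod_cast hmod
    calc ‖lam (w t) - lam (w (s*τ))‖ ≤ κ * ‖w t - w (s*τ)‖ := hlamlip _ _
      _ ≤ κ * (((t - s*τ : ℕ):ℝ) * (η*G)) := mul_le_mul_of_nonneg_left h2 (le_of_lt hκ0)
      _ ≤ κ * ((τ:ℝ)*(η*G)) :=
          mul_le_mul_of_nonneg_left (mul_le_mul_of_nonneg_right h3 hηG) (le_of_lt hκ0)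
  have hDs' := hDs s hsS
  have htri : ‖lam (w t) - lamSeq s‖
      ≤ ‖lam (w t) - lam (w (s*τ))‖ + ‖lam (w (s*τ)) - lamSeq s‖ :=
    norm_sub_le_norm_sub_add_norm_sub _ _ _
  have hrev : ‖lam (w (s*τ)) - lamSeq s‖ = d s := by
    simp only [hd]; exact norm_sub_rev _ _
  rw [hrev] at htri
  have hsq : ‖lam (w t) - lamSeq s‖^2 ≤ 2*‖lam (w t) - lam (w (s*τ))‖^2 + 2*(d s)^2 := by
    nlinarith [pow_le_pow_left₀ (norm_nonneg (lam (w t) - lamSeq s)) htri 2,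
      sq_nonneg (‖lam (w t) - lam (w (s*τ))‖ - d s)]
  have hX : ‖lam (w t) - lam (w (s*τ))‖^2 ≤ κ^2 * ((τ:ℝ)^2 * (η^2 * G^2)) := by
    have h := pow_le_pow_left₀ (norm_nonneg _) hmove2 2
    calc ‖lam (w t) - lam (w (s*τ))‖^2 ≤ (κ * ((τ:ℝ) * (η * G)))^2 := h
      _ = κ^2 * ((τ:ℝ)^2 * (η^2 * G^2)) := by ring
  have hd0w : d 0 ^ 2 = ‖lamSeq 0 - lam (w 0)‖ ^ 2 := by
    simp only [hd, Nat.zero_mul]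
  have hfin : ‖lam (w t) - lamSeq s‖^2
      ≤ 2*(κ^2 * ((τ:ℝ)^2 * (η^2 * G^2))) + 2*(r^s * d 0^2 + C) := by
    nlinarith [hsq, hX, hDs']
  calc ‖lam (w t) - lamSeq s‖^2
      ≤ 2*(κ^2 * ((τ:ℝ)^2 * (η^2 * G^2))) + 2*(r^s * d 0^2 + C) := hfin
    _ = 2 * r^s * ‖lamSeq 0 - lam (w 0)‖^2
        + 2 * (4*κ^2 + 1) * κ^2 * (τ:ℝ)^2 * η^2 * G^2 := by
        rw [hd0w, hC]; ring
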